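/- Let R ⊆ S be rings with S a finitely generated free left R-module via a crossed-product decomposition S = R * Q for a finite group Q of order d (so S ≅ R^d as left R-modules). If every finitely generated R-submodule of every finite free R-module is finitely presented over R, then every finitely generated S-submodule L of a finite free S-module is finitely presented over S. -/

import Mathlib

section Helper

variable {R S : Type*} [Ring R] [Ring S] [Module R S] [IsScalarTower R S S]

/-- The linear combination map `(Fin k → S) →ₗ[S] M` attached to a family `v`. -/
private def piComb {M : Type*} [AddCommGroup M] [Module S M] {k : ℕ} (v : Fin k → M) :
    (Fin k → S) →ₗ[S] M where
  toFun f := ∑ i, f i • v i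
  map_add' f g := by simp [add_smul, Finset.sum_add_distrib]
  map_smul' s f := by simp [Finset.smul_sum, mul_smul]

private lemma piComb_range {M : Type*} [AddCommGroup M] [Module S M] {k : ℕ} (v : Fin k → M) :
    LinearMap.range (piComb v) = Submodule.span S (Set.range v) := by
  apply le_antisymm
  · intro x hx
    obtain ⟨f, rfl⟩ := LinearMap.mem_range.mp hx
    show (∑ i, f i • v i) ∈ Submodule.span S (Set.range v)
    exact Submodule.sum_mem _ fun i _ =>
      Submodule.smul_mem _ _ (Submodule.subset_span (Set.mem_range_self i))
  · rw [Submodule.span_le]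
    rintro x ⟨i, rfl⟩
    rw [SetLike.mem_coe, LinearMap.mem_range]
    classical
    refine ⟨Pi.single i (1 : S), ?_⟩
    show ∑ j, (Pi.single i (1 : S) : Fin k → S) j • v j = v i
    simp_rw [Pi.single_apply, ite_smul, zero_smul]
    rw [Finset.sum_ite_eq' Finset.univ i, if_pos (Finset.mem_univ _), one_smul]

private lemma fg_restrict [Module.Finite R S] {M : Type*} [AddCommGroup M] [Module S M]
    [Module R M] [IsScalarTower R S M] (L : Submodule S M) (hL : L.FG) :
    (L.restrictScalars R).FG := by
  obtain ⟨k, v, hv⟩ := Submodule.fg_iff_exists_fin_generating_family.mp hL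
  have hrange : LinearMap.range (piComb v) = L := by rw [piComb_range, hv]
  haveI hfin : Module.Finite R (Fin k → S) := Module.Finite.pi
  have htop : (⊤ : Submodule R (Fin k → S)).FG := hfin.fg_top
  have key : L.restrictScalars R = Submodule.map ((piComb (S := S) v).restrictScalars R) ⊤ := by
    ext x
    simp only [Submodule.restrictScalars_mem, Submodule.mem_map, Submodule.mem_top, true_and,
      LinearMap.coe_restrictScalars]
    rw [← hrange]
    exact (LinearMap.mem_range (f := piComb v)).trans Iff.rfl
  rw [key]
  exact htop.map _

private lemma fg_of_restrict {M : Type*} [AddCommGroup M] [Module S M]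
    [Module R M] [IsScalarTower R S M] (L : Submodule S M)
    (h : (L.restrictScalars R).FG) : L.FG := by
  obtain ⟨s, e⟩ := h
  refine ⟨s, Submodule.restrictScalars_injective R _ _ (le_antisymm ?_ ?_)⟩
  · show Submodule.span S s ≤ L
    have := Submodule.span_le.mp e.le
    rwa [Submodule.span_le]
  · rw [← e]
    exact Submodule.span_le_restrictScalars _ _ _

private lemma fp_equiv {A M N : Type*} [Ring A] [AddCommGroup M] [AddCommGroup N]
    [Module A M] [Module A N] (e : M ≃ₗ[A] N) [Module.FinitePresentation A M] :
    Module.FinitePresentation A N :=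
  Module.finitePresentation_of_surjective e.toLinearMap e.surjective
    (by rw [LinearEquiv.ker]; exact Submodule.fg_bot)

private theorem helper {ι : Type*} [Fintype ι] (bS : Module.Basis ι R S)
    (hR : ∀ (n : ℕ) (N : Submodule R (Fin n → R)), N.FG → Module.FinitePresentation R ↥N) :
    ∀ (n : ℕ) (L : Submodule S (Fin n → S)), L.FG → Module.FinitePresentation S ↥L := by
  intro n L hL
  haveI : Module.Finite R S := Module.Finite.of_basis bS
  classical
  -- an `R`-basis for `Fin n → S`
  let bF : Module.Basis ((_ : Fin n) × ι) R (Fin n → S) := Pi.basis fun _ => bS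
  let e : (Fin n → S) ≃ₗ[R] (Fin (Fintype.card ((_ : Fin n) × ι)) → R) :=
    (bF.reindex (Fintype.equivFin _)).equivFun
  set P : Submodule R (Fin n → S) := L.restrictScalars R with hPdef
  have hP : P.FG := fg_restrict L hL
  have hN : (P.map e.toLinearMap).FG := hP.map _
  haveI : Module.FinitePresentation R ↥(P.map e.toLinearMap) := hR _ _ hN
  haveI fpP : Module.FinitePresentation R ↥P := fp_equiv (e.submoduleMap P).symm
  haveI : Module.Finite S ↥P := Module.Finite.iff_fg.mpr hL
  obtain ⟨k, f, hf⟩ := Module.Finite.exists_fin' S ↥P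
  have hker : (LinearMap.ker (f.restrictScalars R)).FG :=
    Module.FinitePresentation.fg_ker _ hf
  have hkerS : (LinearMap.ker f).FG := fg_of_restrict _ hker
  have fpPS : Module.FinitePresentation S ↥P :=
    Module.finitePresentation_of_surjective f hf hkerS
  exact fpPS

end Helper

theorem stmt9 {R S : Type*} [Ring R] [Ring S] (ρ : R →+* S)
    (hinj : Function.Injective ρ)
    {Q : Type*} [Group Q] [Fintype Q] (d : ℕ) (hd : Fintype.card Q = d)
    (b : Q → S) (hunit : ∀ q, IsUnit (b q))
    (hbasis : ∀ x : S, ∃! c : Q → R, x = ∑ q, ρ (c q) * b q)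
    (hcross₁ : ∀ q q' : Q, ∃ u : R, IsUnit u ∧ b q * b q' = ρ u * b (q * q'))
    (hcross₂ : ∀ (q : Q) (r : R), ∃ r' : R, b q * ρ r = ρ r' * b q)
    (hR : ∀ (n : ℕ) (N : Submodule R (Fin n → R)), N.FG → Module.FinitePresentation R ↥N) :
    ∀ (n : ℕ) (L : Submodule S (Fin n → S)), L.FG → Module.FinitePresentation S ↥L := by
  letI : Module R S := Module.compHom S ρ
  have hsmul : ∀ (r : R) (s : S), r • s = ρ r * s := fun r s => rfl
  haveI : IsScalarTower R S S := ⟨fun r s t => by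
    show (r • s) * t = r • (s * t)
    rw [hsmul, hsmul, mul_assoc]⟩
  have li : LinearIndependent R b := by
    rw [Fintype.linearIndependent_iff]
    intro g hg i
    obtain ⟨c, hc, hu⟩ := hbasis 0
    have h1 : (0 : S) = ∑ q, ρ ((0 : Q → R) q) * b q := by simp
    have h2 : (0 : S) = ∑ q, ρ (g q) * b q := by
      rw [← hg]; exact Finset.sum_congr rfl fun q _ => (hsmul (g q) (b q)).symm
    have := (hu g h2).trans (hu 0 h1).symm
    exact congrFun this i
  have sp : ⊤ ≤ Submodule.span R (Set.range b) := by
    intro x _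
    obtain ⟨c, hc, -⟩ := hbasis x
    rw [hc]
    exact Submodule.sum_mem _ fun q _ => by
      rw [← hsmul]
      exact Submodule.smul_mem _ _ (Submodule.subset_span ⟨q, rfl⟩)
  exact helper (Module.Basis.mk li sp) hR
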